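/- Assume H is infinite-dimensional and let λ be a Lagrangian subspace of H. Then (λ, λ) is not a Fredholm pair, but for every ε > 0 there exists a Lagrangian subspace μ of H such that (μ, λ) is a Fredholm pair (indeed μ ∩ λ = {0} and μ + λ = H) and ‖P_μ − P_λ‖ < ε. In other words, λ lies in the closure of the Fredholm–Lagrangian–Grassmannian FΛ_λ(H) but not in FΛ_λ(H). -/

import Mathlib

open scoped RealInnerProductSpace

/-- The annihilator of a set `μ` with respect to the symplectic form `ω(x, y) = ⟪J x, y⟫`. -/
def omegaAnn {H : Type*} [NormedAddCommGroup H] [InnerProductSpace ℝ H]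
    (J : H →L[ℝ] H) (μ : Set H) : Set H :=
  {x : H | ∀ y ∈ μ, ⟪J x, y⟫ = 0}

/-- A pair of closed subspaces is a Fredholm pair if their intersection is finite-dimensional
and their sum is closed and of finite codimension. -/
def IsFredholmPair {H : Type*} [NormedAddCommGroup H] [InnerProductSpace ℝ H]
    (μ ν : Submodule ℝ H) : Prop :=
  FiniteDimensional ℝ ↥(μ ⊓ ν) ∧ IsClosed ((μ ⊔ ν : Submodule ℝ H) : Set H) ∧
    FiniteDimensional ℝ (H ⧸ (μ ⊔ ν))

set_option maxHeartbeats 1000000 in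
/-- In infinite dimensions, a Lagrangian `λ` is not in `FΛ_λ(H)` (since `(λ, λ)` is not a
Fredholm pair), but it is in the closure: there are Lagrangians `μ` transversal to `λ`
(hence forming a Fredholm pair with `λ`) whose projections are arbitrarily norm-close
to the projection onto `λ`. -/
theorem lagrangian_in_boundary_of_FredholmLagrangianGrassmannian
    {H : Type*} [NormedAddCommGroup H] [InnerProductSpace ℝ H] [CompleteSpace H]
    (hinf : ¬ FiniteDimensional ℝ H)
    (J : H →L[ℝ] H) (hJ2 : ∀ x : H, J (J x) = -x)
    (hJorth : ∀ x y : H, ⟪J x, J y⟫ = ⟪x, y⟫)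
    (lam : Submodule ℝ H) (hlam : omegaAnn J (lam : Set H) = (lam : Set H))
    (Pl : H →L[ℝ] H)
    (hPlsa : ∀ x y : H, ⟪Pl x, y⟫ = ⟪x, Pl y⟫) (hPlidem : Pl.comp Pl = Pl)
    (hPlrange : LinearMap.range (Pl : H →ₗ[ℝ] H) = lam) :
    ¬ IsFredholmPair lam lam ∧
    ∀ ε : ℝ, 0 < ε →
      ∃ μ : Submodule ℝ H, omegaAnn J (μ : Set H) = (μ : Set H) ∧
        μ ⊓ lam = ⊥ ∧ μ ⊔ lam = ⊤ ∧ IsFredholmPair μ lam ∧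
        ∃ Pμ : H →L[ℝ] H, (∀ x y : H, ⟪Pμ x, y⟫ = ⟪x, Pμ y⟫) ∧
          Pμ.comp Pμ = Pμ ∧ LinearMap.range (Pμ : H →ₗ[ℝ] H) = μ ∧ ‖Pμ - Pl‖ < ε := by
  -- Basic consequences of the hypotheses
  have hJadj : ∀ x y : H, ⟪J x, y⟫ = -⟪x, J y⟫ := by
    intro x y
    have h := hJorth x (J y)
    rw [hJ2, inner_neg_right] at h
    linarith
  have hJnorm : ∀ x : H, ‖J x‖ = ‖x‖ := by
    intro x
    have h : ⟪J x, J x⟫ = ⟪x, x⟫ := hJorth x x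
    rw [real_inner_self_eq_norm_sq, real_inner_self_eq_norm_sq] at h
    nlinarith [norm_nonneg (J x), norm_nonneg x]
  have hPlPl : ∀ y : H, Pl (Pl y) = Pl y := by
    intro y
    have h := congrFun (congrArg DFunLike.coe hPlidem) y
    simpa using h
  have hPlfix : ∀ w : H, w ∈ lam → Pl w = w := by
    intro w hw
    rw [← hPlrange] at hw
    obtain ⟨u, rfl⟩ := hw
    exact hPlPl u
  have hPl_mem : ∀ x : H, Pl x ∈ lam := fun x => hPlrange ▸ ⟨x, rfl⟩
  have hlam_iff : ∀ w : H, w ∈ lam ↔ ∀ y ∈ lam, ⟪J w, y⟫ = 0 := by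
    intro w
    constructor
    · intro hw y hy
      have h : w ∈ omegaAnn J (lam : Set H) := by rw [hlam]; exact hw
      exact h y hy
    · intro h
      have h' : w ∈ omegaAnn J (lam : Set H) := h
      rw [hlam] at h'
      exact h'
  have hPlnorm : ∀ x : H, ‖Pl x‖ ≤ ‖x‖ := by
    intro x
    have h1 : ⟪Pl x, Pl x⟫ = ⟪x, Pl x⟫ := by
      rw [hPlsa x (Pl x), hPlPl]
    have h2 : ⟪Pl x, Pl x⟫ = ‖Pl x‖ ^ 2 := real_inner_self_eq_norm_sq _
    have h3 : ⟪x, Pl x⟫ ≤ ‖x‖ * ‖Pl x‖ := real_inner_le_norm x (Pl x)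
    nlinarith [norm_nonneg x, norm_nonneg (Pl x)]
  -- decomposition: every z = a + J b with a, b ∈ lam
  have hdecomp : ∀ z : H, ∃ a ∈ lam, ∃ b ∈ lam, z = a + J b := by
    intro z
    have hJneg : J (-J (z - Pl z)) = z - Pl z := by
      rw [map_neg, hJ2, neg_neg]
    refine ⟨Pl z, hPl_mem z, -J (z - Pl z), ?_, ?_⟩
    · rw [hlam_iff]
      intro y hy
      rw [← hPlrange] at hy
      obtain ⟨u, rfl⟩ := hy
      rw [hJneg, inner_sub_left, ContinuousLinearMap.coe_coe, hPlsa z (Pl u), hPlPl, sub_self]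
    · rw [hJneg]; abel
  constructor
  · -- (lam, lam) is not a Fredholm pair
    rintro ⟨h1, -, h3⟩
    rw [inf_idem] at h1
    rw [sup_idem] at h3
    obtain ⟨q, hq⟩ := lam.exists_isCompl
    haveI : FiniteDimensional ℝ ↥lam := h1
    haveI : FiniteDimensional ℝ (H ⧸ lam) := h3
    haveI : FiniteDimensional ℝ ↥q :=
      Module.Finite.equiv (Submodule.quotientEquivOfIsCompl lam q hq)
    haveI : FiniteDimensional ℝ ↥(lam ⊔ q) := Submodule.finiteDimensional_sup lam q
    exact hinf (Module.Finite.equiv (LinearEquiv.ofTop _ hq.sup_eq_top))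
  · intro ε hε
    set θ : ℝ := min ε 1 / 7 with hθdef
    have hθpos : 0 < θ := div_pos (lt_min hε one_pos) (by norm_num)
    have hθ1 : θ ≤ 1 / 7 := by
      have := min_le_right ε 1
      rw [hθdef]; linarith
    have hθε : θ ≤ ε / 7 := by
      have := min_le_left ε 1
      rw [hθdef]; linarith
    set c : ℝ := Real.cos θ with hcdef
    set s : ℝ := Real.sin θ with hsdef
    have hspos : 0 < s := Real.sin_pos_of_pos_of_lt_pi hθpos (by
      have := Real.pi_gt_three; linarith)
    have hsθ : s ≤ θ := (Real.sin_lt hθpos).le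
    have hc1 : c ≤ 1 := Real.cos_le_one θ
    have h1c : 1 - c ≤ θ := by
      have h := Real.one_sub_sq_div_two_le_cos (x := θ)
      nlinarith
    have hcs : c ^ 2 + s ^ 2 = 1 := Real.cos_sq_add_sin_sq θ
    set U : H →L[ℝ] H := c • ContinuousLinearMap.id ℝ H + s • J with hUdef
    set V : H →L[ℝ] H := c • ContinuousLinearMap.id ℝ H - s • J with hVdef
    have hUapp : ∀ x : H, U x = c • x + s • J x := by intro x; simp [hUdef]
    have hVapp : ∀ x : H, V x = c • x - s • J x := by intro x; simp [hVdef]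
    have hkey : ∀ x : H, (c * c) • x + (s * s) • x = x := by
      intro x
      rw [← add_smul, show c * c + s * s = 1 by nlinarith, one_smul]
    have hVU : ∀ x : H, V (U x) = x := by
      intro x
      have expand : V (U x) = (c * c + s * s) • x := by
        rw [hUapp x, map_add, map_smul, map_smul, hVapp, hVapp, hJ2]
        module
      rw [expand, show c * c + s * s = 1 by nlinarith, one_smul]
    have hUV : ∀ x : H, U (V x) = x := by
      intro x
      have expand : U (V x) = (c * c + s * s) • x := by
        rw [hVapp x, map_sub, map_smul, map_smul, hUapp, hUapp, hJ2]
        module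
      rw [expand, show c * c + s * s = 1 by nlinarith, one_smul]
    have hUadj : ∀ x y : H, ⟪U x, y⟫ = ⟪x, V y⟫ := by
      intro x y
      rw [hUapp, hVapp, inner_add_left, inner_sub_right, real_inner_smul_left,
        real_inner_smul_left, real_inner_smul_right, real_inner_smul_right, hJadj]
      ring
    have hVadj : ∀ x y : H, ⟪V x, y⟫ = ⟪x, U y⟫ := by
      intro x y
      rw [hUapp, hVapp, inner_sub_left, inner_add_right, real_inner_smul_left,
        real_inner_smul_left, real_inner_smul_right, real_inner_smul_right, hJadj]
      ring
    have hVJ : ∀ x : H, V (J x) = J (V x) := by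
      intro x
      rw [hVapp, hVapp, map_sub, map_smul, map_smul]
    set μ : Submodule ℝ H := lam.map (U.toLinearMap) with hμdef
    have hμ_iff : ∀ x : H, x ∈ μ ↔ V x ∈ lam := by
      intro x
      constructor
      · rintro ⟨w, hw, rfl⟩
        simpa [hVU w] using hw
      · intro h
        exact ⟨V x, h, hUV x⟩
    -- (a) μ is Lagrangian
    have hμlag : omegaAnn J (μ : Set H) = (μ : Set H) := by
      ext x
      simp only [omegaAnn, Set.mem_setOf_eq, SetLike.mem_coe]
      rw [hμ_iff, hlam_iff]
      constructor
      · intro h y hy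
        have h2 := h (U y) ⟨y, hy, rfl⟩
        rw [real_inner_comm, hUadj, real_inner_comm, hVJ] at h2
        exact h2
      · rintro h y ⟨w, hw, rfl⟩
        have h2 := h w hw
        show ⟪J x, U w⟫ = 0
        rw [real_inner_comm, hUadj, real_inner_comm, hVJ]
        exact h2
    -- (b) μ ⊓ lam = ⊥
    have hinf' : μ ⊓ lam = ⊥ := by
      rw [eq_bot_iff]
      rintro x hx
      rw [Submodule.mem_inf] at hx
      obtain ⟨⟨w, hw, rfl⟩, hx2⟩ := hx
      have hx2' : U w ∈ lam := hx2
      have hJw : J w ∈ lam := by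
        have h1 : J w = s⁻¹ • (U w - c • w) := by
          rw [hUapp]
          match_scalars <;> field_simp <;> ring
        rw [h1]
        exact Submodule.smul_mem _ _
          (Submodule.sub_mem _ hx2' (Submodule.smul_mem _ _ hw))
      have h0 : ⟪J w, J w⟫ = 0 := (hlam_iff w).1 hw (J w) hJw
      have hJw0 : J w = 0 := inner_self_eq_zero.mp h0
      have hw0 : w = 0 := by
        have h := hJ2 w
        rw [hJw0, map_zero] at h
        simpa using h.symm
      simp [hw0]
    -- (c) μ ⊔ lam = ⊤
    have hsup : μ ⊔ lam = ⊤ := by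
      rw [eq_top_iff]
      rintro z -
      obtain ⟨a, ha, b, hb, rfl⟩ := hdecomp z
      have hJb : J b = s⁻¹ • U b - (c * s⁻¹) • b := by
        rw [hUapp]
        match_scalars <;> field_simp <;> ring
      rw [hJb]
      refine Submodule.add_mem _ (Submodule.mem_sup_right ha)
        (Submodule.sub_mem _ ?_ (Submodule.mem_sup_right (Submodule.smul_mem _ _ hb)))
      exact Submodule.mem_sup_left (Submodule.smul_mem _ _ ⟨b, hb, rfl⟩)
    -- (d) Fredholm pair
    have hfred : IsFredholmPair μ lam := by
      refine ⟨?_, ?_, ?_⟩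
      · rw [hinf']; infer_instance
      · rw [hsup, Submodule.top_coe]; exact isClosed_univ
      · rw [hsup]
        haveI : Subsingleton (H ⧸ (⊤ : Submodule ℝ H)) :=
          Submodule.Quotient.subsingleton_iff.mpr rfl
        infer_instance
    -- (e) the projection onto μ
    set Pμ : H →L[ℝ] H := U.comp (Pl.comp V) with hPμdef
    have hPμapp : ∀ x : H, Pμ x = U (Pl (V x)) := by intro x; rfl
    refine ⟨μ, hμlag, hinf', hsup, hfred, Pμ, ?_, ?_, ?_, ?_⟩
    · intro x y
      rw [hPμapp, hPμapp, hUadj, hPlsa, hVadj]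
    · ext x
      show U (Pl (V (U (Pl (V x))))) = U (Pl (V x))
      rw [hVU, hPlPl]
    · ext x
      simp only [LinearMap.mem_range]
      constructor
      · rintro ⟨z, rfl⟩
        exact ⟨Pl (V z), hPl_mem _, rfl⟩
      · rintro ⟨w, hw, rfl⟩
        refine ⟨U w, ?_⟩
        show U (Pl (V (U w))) = U w
        rw [hVU, hPlfix w hw]
    · -- the norm estimate
      set δ : ℝ := 1 - c + s with hδdef
      have hδ0 : 0 ≤ δ := by simp only [hδdef]; linarith
      have hδθ : δ ≤ 2 * θ := by simp only [hδdef]; linarith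
      have hU1 : ∀ x : H, ‖U x - x‖ ≤ δ * ‖x‖ := by
        intro x
        have h : U x - x = (c - 1) • x + s • J x := by
          rw [hUapp]; module
        rw [h]
        calc ‖(c - 1) • x + s • J x‖ ≤ ‖(c - 1) • x‖ + ‖s • J x‖ := norm_add_le _ _
          _ = |c - 1| * ‖x‖ + |s| * ‖J x‖ := by rw [norm_smul, norm_smul, Real.norm_eq_abs, Real.norm_eq_abs]
          _ = (1 - c) * ‖x‖ + s * ‖x‖ := by
              rw [hJnorm, abs_of_nonpos (by linarith), abs_of_pos hspos]; ring
          _ = δ * ‖x‖ := by rw [hδdef]; ring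
      have hV1 : ∀ x : H, ‖V x - x‖ ≤ δ * ‖x‖ := by
        intro x
        have h : V x - x = (c - 1) • x + (-s) • J x := by
          rw [hVapp]; module
        rw [h]
        calc ‖(c - 1) • x + (-s) • J x‖ ≤ ‖(c - 1) • x‖ + ‖(-s) • J x‖ := norm_add_le _ _
          _ = |c - 1| * ‖x‖ + |(-s)| * ‖J x‖ := by rw [norm_smul, norm_smul, Real.norm_eq_abs, Real.norm_eq_abs]
          _ = (1 - c) * ‖x‖ + s * ‖x‖ := by
              rw [hJnorm, abs_of_nonpos (by linarith), abs_neg, abs_of_pos hspos]; ring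
          _ = δ * ‖x‖ := by rw [hδdef]; ring
      have hVnorm : ∀ x : H, ‖V x‖ ≤ (1 + δ) * ‖x‖ := by
        intro x
        calc ‖V x‖ = ‖(V x - x) + x‖ := by rw [sub_add_cancel]
          _ ≤ ‖V x - x‖ + ‖x‖ := norm_add_le _ _
          _ ≤ δ * ‖x‖ + ‖x‖ := by linarith [hV1 x]
          _ = (1 + δ) * ‖x‖ := by ring
      have hbound : ∀ x : H, ‖(Pμ - Pl) x‖ ≤ (δ * (1 + δ) + δ) * ‖x‖ := by
        intro x
        have e1 : (Pμ - Pl) x = (U (Pl (V x)) - Pl (V x)) + (Pl (V x) - Pl x) := by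
          rw [ContinuousLinearMap.sub_apply, hPμapp]; abel
        have h1 : ‖U (Pl (V x)) - Pl (V x)‖ ≤ δ * ((1 + δ) * ‖x‖) := by
          calc ‖U (Pl (V x)) - Pl (V x)‖ ≤ δ * ‖Pl (V x)‖ := hU1 _
            _ ≤ δ * ‖V x‖ := by
                exact mul_le_mul_of_nonneg_left (hPlnorm _) hδ0
            _ ≤ δ * ((1 + δ) * ‖x‖) := mul_le_mul_of_nonneg_left (hVnorm x) hδ0
        have h2 : ‖Pl (V x) - Pl x‖ ≤ δ * ‖x‖ := by
          calc ‖Pl (V x) - Pl x‖ = ‖Pl (V x - x)‖ := by rw [map_sub]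
            _ ≤ ‖V x - x‖ := hPlnorm _
            _ ≤ δ * ‖x‖ := hV1 x
        calc ‖(Pμ - Pl) x‖ = ‖(U (Pl (V x)) - Pl (V x)) + (Pl (V x) - Pl x)‖ := by rw [e1]
          _ ≤ ‖U (Pl (V x)) - Pl (V x)‖ + ‖Pl (V x) - Pl x‖ := norm_add_le _ _
          _ ≤ δ * ((1 + δ) * ‖x‖) + δ * ‖x‖ := add_le_add h1 h2
          _ = (δ * (1 + δ) + δ) * ‖x‖ := by ring
      have hop : ‖Pμ - Pl‖ ≤ δ * (1 + δ) + δ :=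
        ContinuousLinearMap.opNorm_le_bound _ (by nlinarith [hδ0]) hbound
      have hfin : δ * (1 + δ) + δ < ε := by nlinarith [hδθ, hδ0, hθ1, hθε, hε]
      exact lt_of_le_of_lt hop hfin
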